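/- Comparison of Dirichlet forms (Lemma in Section 3.4): Assume C_+, C_-, C_A, C_C are positive constants and C_E ≥ 0. Then there exists a positive constant C (one may take C = min{C_+, C_-, C_A/3}) such that for every positive integer N, every integer K with -|Ω_N| ≤ K ≤ |Ω_N|, every function f : Y_{N,K} → R, and every ordered pair b = (x,y) of distinct sites of Ω_N: C·⟨(-L̃_{xy} - L̃_{yx})f, f⟩_{N,K} ≤ ⟨(-L_{(x,y)} - L_{(y,x)})f, f⟩_{N,K}. -/

import Mathlib

open Finset

/-- Spin value of a configuration at a site: the `Fin 3` values `0, 1, 2`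
code the spins `-1, 0, 1` respectively. -/
def spin {V : Type*} (η : V → Fin 3) (x : V) : ℤ := (η x : ℤ) - 1

/-- The configuration `η^{(x,y)}`: swap the values at `x` and `y` in the three exchange cases,
annihilate a `(+,-)` pair, or create a `(-,+)` pair from two empty sites. -/
def cfgFlip {V : Type*} [DecidableEq V] (x y : V) (η : V → Fin 3) : V → Fin 3 := fun z =>
  if z = x then (if η x = 2 ∧ η y = 0 then 1 else if η x = 1 ∧ η y = 1 then 0 else η y)
  else if z = y then (if η x = 2 ∧ η y = 0 then 1 else if η x = 1 ∧ η y = 1 then 2 else η x)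
  else η z

/-- The jump rate `c_{(x,y)}(η)` with constants `C_+, C_-, C_E, C_A, C_C`. -/
def rate {V : Type*} (Cp Cm CE CA CC : ℝ) (x y : V) (η : V → Fin 3) : ℝ :=
  if η x = 2 ∧ η y = 1 then Cp
  else if η x = 1 ∧ η y = 0 then Cm
  else if η x = 0 ∧ η y = 2 then CE
  else if η x = 2 ∧ η y = 0 then CA
  else if η x = 1 ∧ η y = 1 then CC
  else 0

/-- The single-bond generator `L_{(x,y)} f (η) = c_{(x,y)}(η) (f(η^{(x,y)}) - f(η))`. -/
noncomputable def Lbond {V : Type*} [DecidableEq V] (Cp Cm CE CA CC : ℝ) (x y : V)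
    (f : (V → Fin 3) → ℝ) (η : V → Fin 3) : ℝ :=
  rate Cp Cm CE CA CC x y η * (f (cfgFlip x y η) - f η)

/-- Nearest neighbours in the box `Ω_N = {1,...,N}^d`: `|x - y| = 1` in the sum norm. -/
def boxNbr {d N : ℕ} (x y : Fin d → Fin N) : Prop :=
  (∑ i, |((x i : ℤ) - (y i : ℤ))|) = 1

instance {d N : ℕ} (x y : Fin d → Fin N) : Decidable (boxNbr x y) := by
  unfold boxNbr; infer_instance

/-- Number of sites occupied by `-` particles (`Fin 3` value `0`). -/
def minusCount {V : Type*} [Fintype V] [DecidableEq V] (η : V → Fin 3) : ℕ :=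
  (univ.filter fun x => η x = 0).card

/-- Total charge `Σ_x η(x)`. -/
def charge {V : Type*} [Fintype V] (η : V → Fin 3) : ℤ := ∑ x, spin η x

/-- Normalization constant of the canonical measure `μ_{N,K}` on `Ω_N = {1,...,N}^d`
(weights proportional to `β^{X(η)}` on configurations with charge `K`). -/
noncomputable def canZ (d N : ℕ) (β : ℝ) (K : ℤ) : ℝ :=
  ∑ η : (Fin d → Fin N) → Fin 3, if charge η = K then β ^ minusCount η else 0

/-- Expectation `⟨f⟩_{N,K}` with respect to the canonical measure `μ_{N,K}`. -/
noncomputable def canMean (d N : ℕ) (β : ℝ) (K : ℤ)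
    (f : ((Fin d → Fin N) → Fin 3) → ℝ) : ℝ :=
  (∑ η : (Fin d → Fin N) → Fin 3,
      if charge η = K then β ^ minusCount η * f η else 0) / canZ d N β K

set_option linter.unusedSectionVars false

namespace DFC

def pA (a b : Fin 3) : Fin 3 := if a = 2 ∧ b = 0 then 1 else if a = 1 ∧ b = 1 then 0 else b
def pB (a b : Fin 3) : Fin 3 := if a = 2 ∧ b = 0 then 1 else if a = 1 ∧ b = 1 then 2 else a

lemma fin3 (a : Fin 3) : a = 0 ∨ a = 1 ∨ a = 2 := by omega

variable {V : Type*} [DecidableEq V]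

lemma flip_x (x y : V) (η : V → Fin 3) : cfgFlip x y η x = pA (η x) (η y) := by
  simp [cfgFlip, pA]

lemma flip_y {x y : V} (hxy : x ≠ y) (η : V → Fin 3) :
    cfgFlip x y η y = pB (η x) (η y) := by
  simp [cfgFlip, pB, Ne.symm hxy]

lemma flip_ne {x y z : V} (hzx : z ≠ x) (hzy : z ≠ y) (η : V → Fin 3) :
    cfgFlip x y η z = η z := by
  simp [cfgFlip, hzx, hzy]

lemma pinv : ∀ a b : Fin 3, pB (pB a b) (pA a b) = a ∧ pA (pB a b) (pA a b) = b := by decide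

lemma flip_flip {x y : V} (hxy : x ≠ y) (η : V → Fin 3) :
    cfgFlip y x (cfgFlip x y η) = η := by
  funext z
  by_cases hzx : z = x
  · rw [hzx, flip_y (Ne.symm hxy) (cfgFlip x y η), flip_x, flip_y hxy]
    exact (pinv _ _).1
  · by_cases hzy : z = y
    · rw [hzy, flip_x y x (cfgFlip x y η), flip_x, flip_y hxy]
      exact (pinv _ _).2
    · rw [flip_ne hzy hzx, flip_ne hzx hzy]

lemma flip_bij {x y : V} (hxy : x ≠ y) :
    Function.Bijective (cfgFlip x y : (V → Fin 3) → (V → Fin 3)) := by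
  refine Function.bijective_iff_has_inverse.2 ⟨cfgFlip y x, flip_flip hxy, fun η => ?_⟩
  exact flip_flip (Ne.symm hxy) η

variable [Fintype V]

lemma sum_flip {x y : V} (hxy : x ≠ y) (G : (V → Fin 3) → ℝ) :
    ∑ η : V → Fin 3, G (cfgFlip x y η) = ∑ η : V → Fin 3, G η :=
  Fintype.sum_bijective _ (flip_bij hxy) _ _ (fun _ => rfl)

lemma sum_split {M : Type*} [AddCommMonoid M] {x y : V} (hxy : x ≠ y) (F : V → M) :
    ∑ z, F z = (∑ z ∈ (univ.erase x).erase y, F z) + F y + F x := by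
  have h2 : (∑ z ∈ (univ.erase x).erase y, F z) + F y = ∑ z ∈ univ.erase x, F z :=
    Finset.sum_erase_add _ _ (by simp [Ne.symm hxy])
  have h1 : (∑ z ∈ univ.erase x, F z) + F x = ∑ z, F z :=
    Finset.sum_erase_add _ _ (mem_univ x)
  rw [← h1, ← h2]

lemma pAB_add : ∀ a b : Fin 3, ((pA a b : Fin 3) : ℤ) + ((pB a b : Fin 3) : ℤ) = (a : ℤ) + b := by
  decide

lemma charge_flip {x y : V} (hxy : x ≠ y) (η : V → Fin 3) :
    charge (cfgFlip x y η) = charge η := by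
  have hin : (∑ z ∈ (univ.erase x).erase y, spin (cfgFlip x y η) z)
      = ∑ z ∈ (univ.erase x).erase y, spin η z := by
    refine Finset.sum_congr rfl fun z hz => ?_
    simp only [mem_erase] at hz
    simp only [spin]
    rw [flip_ne hz.2.1 hz.1]
  have hx' : spin (cfgFlip x y η) x = (pA (η x) (η y) : ℤ) - 1 := by
    simp only [spin]; rw [flip_x]
  have hy' : spin (cfgFlip x y η) y = (pB (η x) (η y) : ℤ) - 1 := by
    simp only [spin]; rw [flip_y hxy]
  rw [charge, charge, sum_split hxy (spin (cfgFlip x y η)), sum_split hxy (spin η),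
    hin, hx', hy']
  have h2 : spin η y = (η y : ℤ) - 1 := rfl
  have h3 : spin η x = (η x : ℤ) - 1 := rfl
  rw [h2, h3]
  linarith [pAB_add (η x) (η y)]

lemma minus_flip {x y : V} (hxy : x ≠ y) (η : V → Fin 3) :
    minusCount (cfgFlip x y η) + (if η x = 2 ∧ η y = 0 then 1 else 0)
      = minusCount η + (if η x = 1 ∧ η y = 1 then 1 else 0) := by
  unfold minusCount
  rw [Finset.card_filter, Finset.card_filter,
    sum_split hxy (fun z => if cfgFlip x y η z = 0 then 1 else 0),
    sum_split hxy (fun z => if η z = 0 then 1 else 0)]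
  have hin : (∑ z ∈ (univ.erase x).erase y, if cfgFlip x y η z = 0 then 1 else 0)
      = ∑ z ∈ (univ.erase x).erase y, if η z = 0 then 1 else 0 := by
    refine Finset.sum_congr rfl fun z hz => ?_
    simp only [mem_erase] at hz
    rw [flip_ne hz.2.1 hz.1]
  rw [hin, flip_x, flip_y hxy]
  have key : ∀ a b : Fin 3,
      ((if pA a b = 0 then 1 else 0) : ℕ) + (if pB a b = 0 then 1 else 0)
        + (if a = 2 ∧ b = 0 then 1 else 0)
      = (if a = 0 then 1 else 0) + (if b = 0 then 1 else 0)
        + (if a = 1 ∧ b = 1 then 1 else 0) := by decide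
  have := key (η x) (η y)
  omega

/-- The weight of the canonical measure. -/
noncomputable def wt (β : ℝ) (K : ℤ) {V : Type*} [Fintype V] [DecidableEq V]
    (η : V → Fin 3) : ℝ :=
  if charge η = K then β ^ minusCount η else 0

lemma wt_nonneg {β : ℝ} (hβ : 0 ≤ β) (K : ℤ) (η : V → Fin 3) : 0 ≤ wt β K η := by
  unfold wt; split
  · positivity
  · exact le_refl 0

lemma wt_swap {β : ℝ} {K : ℤ} {x y : V} (hxy : x ≠ y) {η : V → Fin 3}
    (hA : ¬(η x = 2 ∧ η y = 0)) (hC : ¬(η x = 1 ∧ η y = 1)) :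
    wt β K (cfgFlip x y η) = wt β K η := by
  unfold wt
  rw [charge_flip hxy]
  have := minus_flip hxy η
  rw [if_neg hA, if_neg hC] at this
  rw [show minusCount (cfgFlip x y η) = minusCount η by omega]

lemma wt_A {β : ℝ} {K : ℤ} {x y : V} (hxy : x ≠ y) {η : V → Fin 3}
    (h : η x = 2 ∧ η y = 0) :
    wt β K η = β * wt β K (cfgFlip x y η) := by
  unfold wt
  rw [charge_flip hxy]
  have hm := minus_flip hxy η
  rw [if_pos h, if_neg (by simp [h.1])] at hm
  have : minusCount η = minusCount (cfgFlip x y η) + 1 := by omega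
  rw [this]
  split
  · rw [pow_succ]; ring
  · ring

lemma wt_C {β : ℝ} {K : ℤ} {x y : V} (hxy : x ≠ y) {η : V → Fin 3}
    (h : η x = 1 ∧ η y = 1) :
    wt β K (cfgFlip x y η) = β * wt β K η := by
  unfold wt
  rw [charge_flip hxy]
  have hm := minus_flip hxy η
  rw [if_pos h, if_neg (by simp [h.1])] at hm
  have : minusCount (cfgFlip x y η) = minusCount η + 1 := by omega
  rw [this]
  split
  · rw [pow_succ]; ring
  · ring

/-- Detailed balance. -/
lemma detailed_balance {β : ℝ} {K : ℤ} {x y : V} (hxy : x ≠ y)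
    (Cp Cm CE CA CC : ℝ) (hCC : CC = β * CA) (η : V → Fin 3) :
    wt β K η * rate Cp Cm CE CA CC x y η
      = wt β K (cfgFlip x y η) * rate Cp Cm CE CA CC y x (cfgFlip x y η) := by
  rcases fin3 (η x) with hx | hx | hx <;> rcases fin3 (η y) with hy | hy | hy <;>
    [skip; skip; skip; skip; skip; skip; skip; skip; skip]
  case inl.inl =>
    have r1 : rate Cp Cm CE CA CC x y η = 0 := by simp [rate, hx, hy]
    have r2 : rate Cp Cm CE CA CC y x (cfgFlip x y η) = 0 := by
      simp [rate, flip_x, flip_y hxy, hx, hy, pA, pB]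
    rw [r1, r2]; ring
  case inl.inr.inl =>
    have r1 : rate Cp Cm CE CA CC x y η = 0 := by simp [rate, hx, hy]
    have r2 : rate Cp Cm CE CA CC y x (cfgFlip x y η) = 0 := by
      simp [rate, flip_x, flip_y hxy, hx, hy, pA, pB]
    rw [r1, r2]; ring
  case inl.inr.inr =>
    -- (0,2) exchange CE
    have r1 : rate Cp Cm CE CA CC x y η = CE := by simp [rate, hx, hy]
    have r2 : rate Cp Cm CE CA CC y x (cfgFlip x y η) = CE := by
      simp [rate, flip_x, flip_y hxy, hx, hy, pA, pB]
    rw [wt_swap hxy (by simp [hx, hy]) (by simp [hx, hy]), r1, r2]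
  case inr.inl.inl =>
    -- (1,0) exchange Cm
    have r1 : rate Cp Cm CE CA CC x y η = Cm := by simp [rate, hx, hy]
    have r2 : rate Cp Cm CE CA CC y x (cfgFlip x y η) = Cm := by
      simp [rate, flip_x, flip_y hxy, hx, hy, pA, pB]
    rw [wt_swap hxy (by simp [hx, hy]) (by simp [hx, hy]), r1, r2]
  case inr.inl.inr.inl =>
    -- (1,1) creation
    have r1 : rate Cp Cm CE CA CC x y η = CC := by simp [rate, hx, hy]
    have r2 : rate Cp Cm CE CA CC y x (cfgFlip x y η) = CA := by
      simp [rate, flip_x, flip_y hxy, hx, hy, pA, pB]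
    rw [wt_C hxy ⟨hx, hy⟩, r1, r2, hCC]; ring
  case inr.inl.inr.inr =>
    have r1 : rate Cp Cm CE CA CC x y η = 0 := by simp [rate, hx, hy]
    have r2 : rate Cp Cm CE CA CC y x (cfgFlip x y η) = 0 := by
      simp [rate, flip_x, flip_y hxy, hx, hy, pA, pB]
    rw [r1, r2]; ring
  case inr.inr.inl =>
    -- (2,0) annihilation
    have r1 : rate Cp Cm CE CA CC x y η = CA := by simp [rate, hx, hy]
    have r2 : rate Cp Cm CE CA CC y x (cfgFlip x y η) = CC := by
      simp [rate, flip_x, flip_y hxy, hx, hy, pA, pB]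
    rw [wt_A hxy ⟨hx, hy⟩, r1, r2, hCC]; ring
  case inr.inr.inr.inl =>
    -- (2,1) exchange Cp
    have r1 : rate Cp Cm CE CA CC x y η = Cp := by simp [rate, hx, hy]
    have r2 : rate Cp Cm CE CA CC y x (cfgFlip x y η) = Cp := by
      simp [rate, flip_x, flip_y hxy, hx, hy, pA, pB]
    rw [wt_swap hxy (by simp [hx, hy]) (by simp [hx, hy]), r1, r2]
  case inr.inr.inr.inr =>
    have r1 : rate Cp Cm CE CA CC x y η = 0 := by simp [rate, hx, hy]
    have r2 : rate Cp Cm CE CA CC y x (cfgFlip x y η) = 0 := by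
      simp [rate, flip_x, flip_y hxy, hx, hy, pA, pB]
    rw [r1, r2]; ring

/-- Symmetrized Dirichlet form. -/
lemma dirichlet_symm {β : ℝ} {K : ℤ} {x y : V} (hxy : x ≠ y)
    (Cp Cm CE CA CC : ℝ) (hCC : CC = β * CA) (f : (V → Fin 3) → ℝ) :
    ∑ η : V → Fin 3, wt β K η *
        (-(Lbond Cp Cm CE CA CC x y f η + Lbond Cp Cm CE CA CC y x f η) * f η)
      = ∑ η : V → Fin 3, wt β K η * rate Cp Cm CE CA CC x y η
          * (f (cfgFlip x y η) - f η) ^ 2 := by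
  have step1 : ∀ η : V → Fin 3, wt β K η *
      (-(Lbond Cp Cm CE CA CC x y f η + Lbond Cp Cm CE CA CC y x f η) * f η)
      = wt β K η * rate Cp Cm CE CA CC x y η * ((f η - f (cfgFlip x y η)) * f η)
        + wt β K η * rate Cp Cm CE CA CC y x η * ((f η - f (cfgFlip y x η)) * f η) := by
    intro η; simp only [Lbond]; ring
  rw [Finset.sum_congr rfl (fun η _ => step1 η), Finset.sum_add_distrib]
  have h2 : (∑ η : V → Fin 3,
        wt β K η * rate Cp Cm CE CA CC y x η * ((f η - f (cfgFlip y x η)) * f η))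
      = ∑ η : V → Fin 3, wt β K η * rate Cp Cm CE CA CC x y η
          * ((f (cfgFlip x y η) - f η) * f (cfgFlip x y η)) := by
    rw [← sum_flip hxy (fun ζ =>
      wt β K ζ * rate Cp Cm CE CA CC y x ζ * ((f ζ - f (cfgFlip y x ζ)) * f ζ))]
    refine Finset.sum_congr rfl fun η _ => ?_
    simp only [flip_flip hxy]
    rw [← detailed_balance hxy Cp Cm CE CA CC hCC η]
  rw [h2, ← Finset.sum_add_distrib]
  refine Finset.sum_congr rfl fun η _ => by ring

lemma class02_T {x y : V} (hxy : x ≠ y) {η : V → Fin 3} (h : η x = 0 ∧ η y = 2) :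
    cfgFlip x y η x = 2 ∧ cfgFlip x y η y = 0 := by
  rw [flip_x, flip_y hxy, h.1, h.2]
  constructor <;> decide

lemma class20_T {x y : V} (hxy : x ≠ y) {η : V → Fin 3} (h : η x = 2 ∧ η y = 0) :
    cfgFlip x y η x = 1 ∧ cfgFlip x y η y = 1 := by
  rw [flip_x, flip_y hxy, h.1, h.2]
  constructor <;> decide

lemma T3_eq {x y : V} (hxy : x ≠ y) {η : V → Fin 3} (h : η x = 0 ∧ η y = 2) :
    cfgFlip x y (cfgFlip x y (cfgFlip x y η)) = η := by
  have h1 := class02_T hxy h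
  have h2 := class20_T hxy h1
  funext z
  by_cases hzx : z = x
  · rw [hzx, flip_x, h2.1, h2.2, h.1]; decide
  · by_cases hzy : z = y
    · rw [hzy, flip_y hxy, h2.1, h2.2, h.2]; decide
    · rw [flip_ne hzx hzy, flip_ne hzx hzy, flip_ne hzx hzy]

lemma rate_decomp (Cp Cm CE CA CC : ℝ) (x y : V) (η : V → Fin 3) (w d : ℝ) :
    w * rate Cp Cm CE CA CC x y η * d
    = Cp * (if η x = 2 ∧ η y = 1 then w * d else 0)
      + Cm * (if η x = 1 ∧ η y = 0 then w * d else 0)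
      + CE * (if η x = 0 ∧ η y = 2 then w * d else 0)
      + CA * (if η x = 2 ∧ η y = 0 then w * d else 0)
      + CC * (if η x = 1 ∧ η y = 1 then w * d else 0) := by
  rcases fin3 (η x) with hx | hx | hx <;> rcases fin3 (η y) with hy | hy | hy <;>
    simp [rate, hx, hy] <;> ring

lemma sum_rate_decomp (Cp Cm CE CA CC : ℝ) (x y : V) (w d : (V → Fin 3) → ℝ) :
    (∑ η : V → Fin 3, w η * rate Cp Cm CE CA CC x y η * d η)
    = Cp * (∑ η : V → Fin 3, if η x = 2 ∧ η y = 1 then w η * d η else 0)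
      + Cm * (∑ η : V → Fin 3, if η x = 1 ∧ η y = 0 then w η * d η else 0)
      + CE * (∑ η : V → Fin 3, if η x = 0 ∧ η y = 2 then w η * d η else 0)
      + CA * (∑ η : V → Fin 3, if η x = 2 ∧ η y = 0 then w η * d η else 0)
      + CC * (∑ η : V → Fin 3, if η x = 1 ∧ η y = 1 then w η * d η else 0) := by
  rw [Finset.sum_congr rfl (fun η _ => rate_decomp Cp Cm CE CA CC x y η (w η) (d η))]
  simp only [Finset.sum_add_distrib, ← Finset.mul_sum]

lemma ite_wt_sq_nonneg {β : ℝ} (hβ : 0 ≤ β) (K : ℤ) (P : Prop) [Decidable P]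
    (η : V → Fin 3) (r : ℝ) : 0 ≤ if P then wt β K η * r ^ 2 else 0 := by
  split
  · exact mul_nonneg (wt_nonneg hβ K η) (sq_nonneg r)
  · exact le_refl 0

lemma S02_le {β : ℝ} {K : ℤ} {x y : V} (hxy : x ≠ y) (hβ : 0 < β)
    (f : (V → Fin 3) → ℝ) :
    (∑ η : V → Fin 3, if η x = 0 ∧ η y = 2 then
        wt β K η * (f (cfgFlip x y η) - f η) ^ 2 else 0)
    ≤ 2 * (∑ η : V → Fin 3, if η x = 2 ∧ η y = 0 then
          wt β K η * (f (cfgFlip x y η) - f η) ^ 2 else 0)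
      + 2 * β * (∑ η : V → Fin 3, if η x = 1 ∧ η y = 1 then
          wt β K η * (f (cfgFlip x y η) - f η) ^ 2 else 0) := by
  set G1 : (V → Fin 3) → ℝ := fun ζ =>
    if ζ x = 2 ∧ ζ y = 0 then wt β K ζ * (f (cfgFlip x y ζ) - f ζ) ^ 2 else 0 with hG1
  set G2 : (V → Fin 3) → ℝ := fun ζ =>
    if ζ x = 1 ∧ ζ y = 1 then wt β K ζ * (f (cfgFlip x y ζ) - f ζ) ^ 2 else 0 with hG2
  have key : ∀ η : V → Fin 3,
      (if η x = 0 ∧ η y = 2 then wt β K η * (f (cfgFlip x y η) - f η) ^ 2 else 0)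
      ≤ 2 * G1 (cfgFlip x y η) + 2 * β * G2 (cfgFlip x y (cfgFlip x y η)) := by
    intro η
    by_cases h : η x = 0 ∧ η y = 2
    · have h1 := class02_T hxy h
      have h2 := class20_T hxy h1
      have h3 := T3_eq hxy h
      rw [if_pos h, hG1, hG2]
      simp only [if_pos h1, if_pos h2, h3]
      have e1 : wt β K (cfgFlip x y η) = wt β K η :=
        wt_swap hxy (by simp [h.1]) (by simp [h.1])
      have e2 : wt β K (cfgFlip x y η)
          = β * wt β K (cfgFlip x y (cfgFlip x y η)) := wt_A hxy h1
      have hw : 0 ≤ wt β K η := wt_nonneg hβ.le K η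
      have hsq := mul_nonneg hw (sq_nonneg
        ((f (cfgFlip x y (cfgFlip x y η)) - f (cfgFlip x y η))
          - (f η - f (cfgFlip x y (cfgFlip x y η)))))
      nlinarith [hsq, e1, e2]
    · rw [if_neg h]
      have n1 : 0 ≤ G1 (cfgFlip x y η) := ite_wt_sq_nonneg hβ.le K _ _ _
      have n2 : 0 ≤ G2 (cfgFlip x y (cfgFlip x y η)) := ite_wt_sq_nonneg hβ.le K _ _ _
      nlinarith [n1, n2]
  calc (∑ η : V → Fin 3, if η x = 0 ∧ η y = 2 then
        wt β K η * (f (cfgFlip x y η) - f η) ^ 2 else 0)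
      ≤ ∑ η : V → Fin 3,
          (2 * G1 (cfgFlip x y η) + 2 * β * G2 (cfgFlip x y (cfgFlip x y η))) :=
        Finset.sum_le_sum fun η _ => key η
    _ = 2 * (∑ η : V → Fin 3, G1 η) + 2 * β * (∑ η : V → Fin 3, G2 η) := by
        rw [Finset.sum_add_distrib, ← Finset.mul_sum, ← Finset.mul_sum,
          sum_flip hxy G1, sum_flip hxy (fun ζ => G2 (cfgFlip x y ζ)),
          sum_flip hxy G2]
    _ = _ := by rw [hG1, hG2]

/-- Core comparison of symmetrized sums. -/
lemma core_ineq {β : ℝ} {K : ℤ} {x y : V} (hxy : x ≠ y) (hβ : 0 < β)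
    (Cp Cm CE CA CC : ℝ) (hCp : 0 < Cp) (hCm : 0 < Cm) (hCA : 0 < CA)
    (hCE : 0 ≤ CE) (hCC : CC = β * CA) (f : (V → Fin 3) → ℝ) :
    min Cp (min Cm (CA / 3)) *
      (∑ η : V → Fin 3, wt β K η *
        (-(Lbond 1 1 1 1 β x y f η + Lbond 1 1 1 1 β y x f η) * f η))
    ≤ ∑ η : V → Fin 3, wt β K η *
        (-(Lbond Cp Cm CE CA CC x y f η + Lbond Cp Cm CE CA CC y x f η) * f η) := by
  rw [dirichlet_symm hxy 1 1 1 1 β (by ring) f, dirichlet_symm hxy Cp Cm CE CA CC hCC f,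
    sum_rate_decomp 1 1 1 1 β x y (wt β K) (fun η => (f (cfgFlip x y η) - f η) ^ 2),
    sum_rate_decomp Cp Cm CE CA CC x y (wt β K) (fun η => (f (cfgFlip x y η) - f η) ^ 2)]
  set C := min Cp (min Cm (CA / 3)) with hCdef
  set S21 := ∑ η : V → Fin 3, if η x = 2 ∧ η y = 1 then
    wt β K η * (f (cfgFlip x y η) - f η) ^ 2 else 0 with hS21
  set S10 := ∑ η : V → Fin 3, if η x = 1 ∧ η y = 0 then
    wt β K η * (f (cfgFlip x y η) - f η) ^ 2 else 0 with hS10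
  set S02 := ∑ η : V → Fin 3, if η x = 0 ∧ η y = 2 then
    wt β K η * (f (cfgFlip x y η) - f η) ^ 2 else 0 with hS02
  set S20 := ∑ η : V → Fin 3, if η x = 2 ∧ η y = 0 then
    wt β K η * (f (cfgFlip x y η) - f η) ^ 2 else 0 with hS20
  set S11 := ∑ η : V → Fin 3, if η x = 1 ∧ η y = 1 then
    wt β K η * (f (cfgFlip x y η) - f η) ^ 2 else 0 with hS11
  have n21 : 0 ≤ S21 := Finset.sum_nonneg fun η _ => ite_wt_sq_nonneg hβ.le K _ _ _
  have n10 : 0 ≤ S10 := Finset.sum_nonneg fun η _ => ite_wt_sq_nonneg hβ.le K _ _ _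
  have n02 : 0 ≤ S02 := Finset.sum_nonneg fun η _ => ite_wt_sq_nonneg hβ.le K _ _ _
  have n20 : 0 ≤ S20 := Finset.sum_nonneg fun η _ => ite_wt_sq_nonneg hβ.le K _ _ _
  have n11 : 0 ≤ S11 := Finset.sum_nonneg fun η _ => ite_wt_sq_nonneg hβ.le K _ _ _
  have hS02le : S02 ≤ 2 * S20 + 2 * β * S11 := S02_le hxy hβ f
  have hCpos : 0 < C := lt_min hCp (lt_min hCm (by linarith))
  have h1 : C ≤ Cp := min_le_left _ _
  have h2 : C ≤ Cm := le_trans (min_le_right _ _) (min_le_left _ _)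
  have h3 : C ≤ CA / 3 := le_trans (min_le_right _ _) (min_le_right _ _)
  have e1 : C * S21 ≤ Cp * S21 := mul_le_mul_of_nonneg_right h1 n21
  have e2 : C * S10 ≤ Cm * S10 := mul_le_mul_of_nonneg_right h2 n10
  have e3 : C * S02 ≤ 2 * (C * S20) + 2 * (C * (β * S11)) := by
    have h := mul_le_mul_of_nonneg_left hS02le hCpos.le
    nlinarith [h]
  have e5 : C * S20 ≤ CA / 3 * S20 := mul_le_mul_of_nonneg_right h3 n20
  have e6 : C * (β * S11) ≤ CA / 3 * (β * S11) :=
    mul_le_mul_of_nonneg_right h3 (mul_nonneg hβ.le n11)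
  have e7 : CC * S11 = 3 * (CA / 3 * (β * S11)) := by rw [hCC]; ring
  have e8 : 0 ≤ CE * S02 := mul_nonneg hCE n02
  nlinarith [e1, e2, e3, e5, e6, e7, e8]

end DFC

/-- Lemma in Section 3.4: comparison of single-bond Dirichlet forms.
The original rates `(C_+, C_-, C_E, C_A, C_C)` dominate the normalized rates
`(1, 1, 1, 1, β)` with `β = C_C/C_A`, up to a positive constant. -/


theorem dirichlet_form_comparison
    (d : ℕ) (hd : 1 ≤ d) (Cp Cm CE CA CC : ℝ)
    (hCp : 0 < Cp) (hCm : 0 < Cm) (hCA : 0 < CA) (hCC : 0 < CC) (hCE : 0 ≤ CE) :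
    ∃ C : ℝ, 0 < C ∧ ∀ N : ℕ, 0 < N → ∀ K : ℤ,
      -((N : ℤ) ^ d) ≤ K → K ≤ (N : ℤ) ^ d →
      ∀ f : ((Fin d → Fin N) → Fin 3) → ℝ, ∀ x y : Fin d → Fin N, x ≠ y →
        C * canMean d N (CC / CA) K
            (fun η => -(Lbond 1 1 1 1 (CC / CA) x y f η + Lbond 1 1 1 1 (CC / CA) y x f η) * f η)
          ≤ canMean d N (CC / CA) K
            (fun η => -(Lbond Cp Cm CE CA CC x y f η + Lbond Cp Cm CE CA CC y x f η) * f η) := by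
  refine ⟨min Cp (min Cm (CA / 3)), lt_min hCp (lt_min hCm (by linarith)), ?_⟩
  intro N _ K _ _ f x y hxy
  set β := CC / CA with hβdef
  have hβ : 0 < β := div_pos hCC hCA
  have hCCeq : CC = β * CA := by rw [hβdef, div_mul_cancel₀]; exact hCA.ne'
  have hnum : ∀ g : ((Fin d → Fin N) → Fin 3) → ℝ,
      (∑ η : (Fin d → Fin N) → Fin 3, if charge η = K then β ^ minusCount η * g η else 0)
      = ∑ η : (Fin d → Fin N) → Fin 3, DFC.wt β K η * g η := by
    intro g
    refine Finset.sum_congr rfl fun η _ => ?_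
    unfold DFC.wt
    split <;> simp
  have hZ : 0 ≤ canZ d N β K := by
    refine Finset.sum_nonneg fun η _ => ?_
    split
    · positivity
    · exact le_refl 0
  rcases eq_or_lt_of_le hZ with hZ0 | hZpos
  · simp only [canMean, ← hZ0, div_zero, mul_zero]
    exact le_refl 0
  · simp only [canMean]
    rw [← mul_div_assoc]
    refine div_le_div_of_nonneg_right ?_ hZpos.le
    rw [hnum, hnum]
    exact DFC.core_ineq hxy hβ Cp Cm CE CA CC hCp hCm hCA hCE hCCeq f
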